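/- arXiv:2311.09486 — 3 statements merged into one kernel-verified Lean document; each statement's English description precedes it below -/
import Mathlib

section
/- Let k ∈ ℕ and p ∈ (0,1) with kp < 1. For the subcritical branching process with offspring distribution Binomial(k,p) started from one individual, the total progeny T_s satisfies P(T_s = j) = (1/j) C(kj, j-1) p^{j-1} (1-p)^{(k-1)j+1} for all j ∈ ℕ. -/
open scoped ENNReal

/-- Binomial thinning of a nonnegative-integer-valued distribution `ξ` with retention
probability `p`: given `ξ = n`, the result is `Binomial(n, p)`. -/
noncomputable def binThin (p : ℝ≥0∞) (hp : p ≤ 1) (ξ : PMF ℕ) : PMF ℕ :=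
  ξ.bind fun n => (PMF.binomial p.toNNReal (by simpa using ENNReal.toNNReal_mono ENNReal.one_ne_top hp) n).map Fin.val

/-- Mean of a `PMF` on `ℕ`. -/
noncomputable def pmfMean (μ : PMF ℕ) : ℝ≥0∞ := ∑' k : ℕ, (k : ℝ≥0∞) * μ k

/-- Tail probability `P(μ ≥ k)`. -/
noncomputable def pmfTail (μ : PMF ℕ) (k : ℕ) : ℝ≥0∞ := ∑' n : ℕ, if k ≤ n then μ n else 0

/-- Probability generating function of a `PMF` on `ℕ`. -/
noncomputable def pmfPgf (μ : PMF ℕ) (s : ℝ) : ℝ := ∑' k : ℕ, (μ k).toReal * s ^ k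

/-- Distribution of the sum of `n` i.i.d. copies of `μ`. -/
noncomputable def iidSum (μ : PMF ℕ) : ℕ → PMF ℕ
  | 0 => PMF.pure 0
  | n + 1 => (iidSum μ n).bind fun t => μ.map (t + ·)

/-- Distribution of the `n`-th generation of a Galton–Watson branching process with
offspring distribution `μ`, started from a single individual. -/
noncomputable def gwGen (μ : PMF ℕ) : ℕ → PMF ℕ
  | 0 => PMF.pure 1
  | n + 1 => (gwGen μ n).bind (iidSum μ)

/-- Extinction probability `P(⋃ₙ {Zₙ = 0})` of the Galton-Watson process:
the events `{Zₙ = 0}` are increasing, so this is `⨆ n, P(Zₙ = 0)`. -/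
noncomputable def extinctionProb (μ : PMF ℕ) : ℝ≥0∞ := ⨆ n, gwGen μ n 0

/-- Survival (non-extinction) probability of the Galton-Watson process. -/
noncomputable def survivalProb (μ : PMF ℕ) : ℝ≥0∞ := 1 - extinctionProb μ

/-- Expected total progeny `E(Σₙ Zₙ)` of the Galton-Watson process (by Tonelli this is
the sum of the means of the generation sizes). -/
noncomputable def progenyMean (μ : PMF ℕ) : ℝ≥0∞ := ∑' n : ℕ, pmfMean (gwGen μ n)

/-- The Riemann zeta function `ζ(γ) = Σ_{j ≥ 1} j^{-γ}` as a real series. -/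
noncomputable def zetaSum (γ : ℝ) : ℝ := ∑' n : ℕ, ((n : ℝ) + 1) ^ (-γ)

/-- The polylogarithm `Li_a(x) = Σ_{j ≥ 1} x^j / j^a`. -/
noncomputable def polylog (a x : ℝ) : ℝ := ∑' n : ℕ, x ^ (n + 1) / ((n : ℝ) + 1) ^ a


/-! ### Auxiliary combinatorics: Raney / Fuss–Catalan numbers -/

/-- Raney numbers `r/(kn+r) C(kn+r, n)` (as reals): coefficients of the `r`-th power of the
Fuss–Catalan generating function `F` with `F = 1 + x F^k`. -/
noncomputable def mpeRaney (k r n : ℕ) : ℝ :=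
  if n = 0 then 1 else (r : ℝ) / ((k * n + r : ℕ) : ℝ) * ((k * n + r).choose n : ℝ)

lemma mpeRaney_nonneg (k r n : ℕ) : 0 ≤ mpeRaney k r n := by
  unfold mpeRaney; split
  · norm_num
  · positivity

lemma mpeRaney_zero (k n : ℕ) : mpeRaney k 0 n = if n = 0 then 1 else 0 := by
  unfold mpeRaney; split <;> simp

lemma mpeRaney_one (k r : ℕ) : mpeRaney k r 0 = 1 := if_pos rfl

lemma mpe_key (a b m r k n : ℝ) (h1 : m = k*(n+1)+r-1) (h2 : (n+1)*a = (m-n)*b)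
    (hm : 0 < m) :
    r/(m+1)*(a+b) = (r-1)/m*a + (r+k-1)/m*b := by
  have hm0 : m ≠ 0 := ne_of_gt hm
  have hm1 : m + 1 ≠ 0 := by positivity
  field_simp
  linear_combination (a+b)*h1 + k*h2

lemma mpeRaney_eq (k r n : ℕ) (hr : 1 ≤ r) :
    mpeRaney k r n = (r : ℝ) / ((k * n + r : ℕ) : ℝ) * ((k * n + r).choose n : ℝ) := by
  unfold mpeRaney; split
  · subst ‹n = 0›
    have h : (0:ℝ) < (r:ℝ) := by exact_mod_cast hr
    simp
    field_simp
  · rfl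

lemma mpeRaney_rec (k r n : ℕ) (hk : 1 ≤ k) (hr : 1 ≤ r) :
    mpeRaney k r (n+1) = mpeRaney k (r-1) (n+1) + mpeRaney k (r+k-1) n := by
  set M : ℕ := k * (n + 1) + r - 1 with hM
  have hkn : n + 1 ≤ k * (n + 1) := Nat.le_mul_of_pos_left _ hk
  have hmul : k * (n + 1) = k * n + k := by ring
  have e1 : k * (n + 1) + r = M + 1 := by omega
  have e2 : k * (n + 1) + (r - 1) = M := by omega
  have e3 : k * n + (r + k - 1) = M := by omega
  have hnM : n + 1 ≤ M := by omega
  have hMpos : (0:ℝ) < (M:ℝ) := by exact_mod_cast Nat.lt_of_lt_of_le (Nat.zero_lt_succ n) hnM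
  have lhs : mpeRaney k r (n+1) = (r:ℝ)/((M:ℝ)+1) * ((M+1).choose (n+1) : ℝ) := by
    rw [mpeRaney, if_neg (Nat.succ_ne_zero n), e1]; push_cast; ring
  have t1 : mpeRaney k (r-1) (n+1) = ((r:ℝ)-1)/(M:ℝ) * ((M).choose (n+1) : ℝ) := by
    rw [mpeRaney, if_neg (Nat.succ_ne_zero n), e2]
    have h9 : ((r - 1 : ℕ) : ℝ) = (r:ℝ) - 1 := by push_cast [hr]; ring
    rw [h9]
  have t2 : mpeRaney k (r+k-1) n = ((r:ℝ)+(k:ℝ)-1)/(M:ℝ) * ((M).choose n : ℝ) := by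
    rw [mpeRaney_eq k (r+k-1) n (by omega), e3]
    have h9 : ((r + k - 1 : ℕ) : ℝ) = (r:ℝ) + (k:ℝ) - 1 := by
      push_cast [Nat.cast_sub (show 1 ≤ r + k by omega)]; ring
    rw [h9]
  rw [lhs, t1, t2]
  have hA : ((M+1).choose (n+1) : ℝ) = (M.choose (n+1) : ℝ) + (M.choose n : ℝ) := by
    rw [Nat.choose_succ_succ]; push_cast; ring
  have hB : ((n:ℝ)+1) * (M.choose (n+1) : ℝ) = ((M:ℝ) - (n:ℝ)) * (M.choose n : ℝ) := by
    have h0 := Nat.choose_succ_right_eq M n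
    have hcast : ((M.choose (n+1) * (n+1) : ℕ) : ℝ) = ((M.choose n * (M - n) : ℕ) : ℝ) := by
      exact_mod_cast congrArg (Nat.cast (R := ℝ)) h0
    push_cast [Nat.cast_sub (show n ≤ M by omega)] at hcast
    linarith
  have hMr : (M:ℝ) = (k:ℝ)*((n:ℝ)+1)+(r:ℝ)-1 := by
    rw [hM]; push_cast [Nat.cast_sub (show 1 ≤ k * (n+1) + r by omega)]; ring
  rw [hA]
  exact mpe_key _ _ _ _ _ _ hMr hB hMpos

lemma mpeRaney_conv (k : ℕ) (hk : 1 ≤ k) :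
    ∀ n s r, ∑ i ∈ Finset.range (n+1), mpeRaney k r i * mpeRaney k s (n - i)
      = mpeRaney k (r+s) n := by
  intro n
  induction n using Nat.strong_induction_on with
  | _ n ih =>
    induction n with
    | zero =>
      intro s r
      simp [mpeRaney_one]
    | succ n' ihn' =>
      clear ihn'
      intro s
      induction s with
      | zero =>
        intro r
        rw [Finset.sum_eq_single_of_mem (n'+1) (Finset.self_mem_range_succ (n'+1))]
        · simp [mpeRaney_one]
        · intro b hb hbne
          have : n' + 1 - b ≠ 0 := by
            have := Finset.mem_range.mp hb; omega
          rw [mpeRaney_zero, if_neg this, mul_zero]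
      | succ s ihs =>
        intro r
        rw [Finset.sum_range_succ]
        simp only [Nat.sub_self]
        have hsplit : ∀ i ∈ Finset.range (n'+1),
            mpeRaney k r i * mpeRaney k (s+1) (n'+1-i)
            = mpeRaney k r i * mpeRaney k s (n'+1-i)
              + mpeRaney k r i * mpeRaney k (s+k) (n'-i) := by
          intro i hi
          have hi' : i ≤ n' := Nat.lt_succ_iff.mp (Finset.mem_range.mp hi)
          have h1 : n' + 1 - i = (n' - i) + 1 := by omega
          rw [h1, mpeRaney_rec k (s+1) (n'-i) hk (by omega),
            show s+1-1 = s from rfl, show s+1+k-1 = s+k by omega, mul_add, ← h1]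
        rw [Finset.sum_congr rfl hsplit, Finset.sum_add_distrib]
        have hA : (∑ i ∈ Finset.range (n'+1),
              mpeRaney k r i * mpeRaney k s (n'+1-i))
            + mpeRaney k r (n'+1) * mpeRaney k (s+1) 0
            = mpeRaney k (r+s) (n'+1) := by
          have h := ihs r
          rw [Finset.sum_range_succ] at h
          simp only [Nat.sub_self] at h
          rw [mpeRaney_one, mul_one] at h ⊢
          exact h
        have hB : (∑ i ∈ Finset.range (n'+1),
              mpeRaney k r i * mpeRaney k (s+k) (n'-i))
            = mpeRaney k (r+(s+k)) n' := ih n' (Nat.lt_succ_self n') (s+k) r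
        have hC := mpeRaney_rec k (r+s+1) n' hk (by omega)
        rw [show r+s+1-1 = r+s by omega, show r+s+1+k-1 = r+(s+k) by omega] at hC
        rw [show r+(s+1) = r+s+1 by omega, hC]
        linarith

/-- Positive-part Raney sequence (zero at `0`). -/
noncomputable def mpeU (k n : ℕ) : ℝ := if n = 0 then 0 else mpeRaney k 1 n

lemma mpeU_def (k n : ℕ) : mpeU k n = if n = 0 then 0 else mpeRaney k 1 n := rfl

/-- `m`-fold convolution power of `mpeU k`. -/
noncomputable def mpeUconv (k : ℕ) : ℕ → ℕ → ℝ
  | 0, n => if n = 0 then 1 else 0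
  | m+1, n => ∑ i ∈ Finset.range (n+1), mpeUconv k m i * mpeU k (n - i)

lemma mpeUconv_zero (k n : ℕ) : mpeUconv k 0 n = if n = 0 then 1 else 0 := rfl

lemma mpeUconv_succ (k m n : ℕ) :
    mpeUconv k (m+1) n = ∑ i ∈ Finset.range (n+1), mpeUconv k m i * mpeU k (n - i) := rfl

/-- `m`-fold convolution power of `mpeRaney k 1`. -/
noncomputable def mpeVconv (k : ℕ) : ℕ → ℕ → ℝ
  | 0, n => if n = 0 then 1 else 0
  | m+1, n => ∑ i ∈ Finset.range (n+1), mpeVconv k m i * mpeRaney k 1 (n - i)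

lemma mpeVconv_eq (k : ℕ) (hk : 1 ≤ k) : ∀ m n, mpeVconv k m n = mpeRaney k m n := by
  intro m
  induction m with
  | zero => intro n; rw [mpeRaney_zero]; rfl
  | succ m ihm =>
    intro n
    show (∑ i ∈ Finset.range (n+1), mpeVconv k m i * mpeRaney k 1 (n - i)) = _
    calc (∑ i ∈ Finset.range (n+1), mpeVconv k m i * mpeRaney k 1 (n - i))
        = ∑ i ∈ Finset.range (n+1), mpeRaney k m i * mpeRaney k 1 (n - i) := by
          apply Finset.sum_congr rfl; intro i _; rw [ihm]
      _ = mpeRaney k (m+1) n := mpeRaney_conv k hk n 1 m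

lemma mpeVconv_expand (k : ℕ) :
    ∀ m n, mpeVconv k m n = ∑ i ∈ Finset.range (m+1), (m.choose i : ℝ) * mpeUconv k i n := by
  intro m
  induction m with
  | zero => intro n; simp [mpeVconv, mpeUconv]
  | succ m ihm =>
    intro n
    have hU1 : ∀ b, mpeRaney k 1 b = mpeU k b + (if b = 0 then 1 else 0) := by
      intro b; unfold mpeU; split
      · rename_i h; subst h; rw [mpeRaney_one]; norm_num
      · simp
    have step1 : mpeVconv k (m+1) n
        = (∑ j ∈ Finset.range (n+1), mpeVconv k m j * mpeU k (n-j)) + mpeVconv k m n := by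
      show (∑ j ∈ Finset.range (n+1), mpeVconv k m j * mpeRaney k 1 (n - j)) = _
      have : ∀ j ∈ Finset.range (n+1),
          mpeVconv k m j * mpeRaney k 1 (n - j)
          = mpeVconv k m j * mpeU k (n-j) + mpeVconv k m j * (if n - j = 0 then 1 else 0) := by
        intro j _; rw [hU1]; ring
      rw [Finset.sum_congr rfl this, Finset.sum_add_distrib]
      congr 1
      rw [Finset.sum_eq_single_of_mem n (Finset.self_mem_range_succ n)]
      · simp
      · intro b hb hbne
        have := Finset.mem_range.mp hb
        rw [if_neg (by omega), mul_zero]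
    have step2 : (∑ j ∈ Finset.range (n+1), mpeVconv k m j * mpeU k (n-j))
        = ∑ i ∈ Finset.range (m+1), (m.choose i : ℝ) * mpeUconv k (i+1) n := by
      have : ∀ j ∈ Finset.range (n+1), mpeVconv k m j * mpeU k (n-j)
          = ∑ i ∈ Finset.range (m+1), (m.choose i : ℝ) * (mpeUconv k i j * mpeU k (n-j)) := by
        intro j _; rw [ihm, Finset.sum_mul]
        apply Finset.sum_congr rfl; intro i _; ring
      rw [Finset.sum_congr rfl this, Finset.sum_comm]
      apply Finset.sum_congr rfl; intro i _
      rw [← Finset.mul_sum]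
      rfl
    rw [step1, step2, ihm]
    rw [Finset.sum_range_succ' (fun i => ((m+1).choose i : ℝ) * mpeUconv k i n) (m+1)]
    have h1 : ∀ i ∈ Finset.range (m+1),
        (((m+1).choose (i+1) : ℕ) : ℝ) * mpeUconv k (i+1) n
        = (m.choose i : ℝ) * mpeUconv k (i+1) n + (m.choose (i+1) : ℝ) * mpeUconv k (i+1) n := by
      intro i _
      rw [Nat.choose_succ_succ]; push_cast; ring
    rw [Finset.sum_congr rfl h1, Finset.sum_add_distrib]
    have h2 : (∑ i ∈ Finset.range (m+1), (m.choose i : ℝ) * mpeUconv k i n)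
        = (∑ i ∈ Finset.range (m+1), (m.choose (i+1) : ℝ) * mpeUconv k (i+1) n)
          + ((m+1).choose 0 : ℝ) * mpeUconv k 0 n := by
      rw [Finset.sum_range_succ (fun i => (m.choose (i+1) : ℝ) * mpeUconv k (i+1) n) m]
      rw [Nat.choose_succ_self]
      rw [Finset.sum_range_succ' (fun i => (m.choose i : ℝ) * mpeUconv k i n) m]
      simp [Nat.choose_zero_right]
    rw [h2]
    ring

lemma mpe_sum_choose_uconv (k j : ℕ) (hk : 1 ≤ k) :
    ∑ i ∈ Finset.range (k+1), (k.choose i : ℝ) * mpeUconv k i j = mpeRaney k 1 (j+1) := by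
  rw [← mpeVconv_expand, mpeVconv_eq k hk]
  rw [mpeRaney_eq k k j hk, mpeRaney_eq k 1 (j+1) le_rfl]
  have e1 : k * (j+1) + 1 = (k*j+k) + 1 := by ring
  rw [e1]
  set N := k*j+k with hN
  have hNpos : 0 < N := by positivity
  have hid := Nat.add_one_mul_choose_eq N j
  have hcast : ((N+1 : ℕ) : ℝ) * (N.choose j : ℝ) = ((N+1).choose (j+1) : ℝ) * ((j+1 : ℕ) : ℝ) := by
    exact_mod_cast congrArg (Nat.cast (R := ℝ)) hid
  push_cast at hcast ⊢
  have hN' : (0:ℝ) < (N:ℝ) := by exact_mod_cast hNpos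
  have hkj : (N:ℝ) = k*j+k := by exact_mod_cast congrArg (Nat.cast (R := ℝ)) hN
  have hj1 : (0:ℝ) < (j:ℝ)+1 := by positivity
  have hCval : (((N+1).choose (j+1) : ℕ) : ℝ) = ((N:ℝ)+1) * ((N.choose j : ℕ) : ℝ) / ((j:ℝ)+1) := by
    push_cast
    field_simp
    linarith [hcast]
  push_cast at hCval
  rw [hCval]
  have h2 : (1:ℝ)/((N:ℝ)+1) * (((N:ℝ)+1) * ((N.choose j : ℕ):ℝ)/((j:ℝ)+1)) = ((N.choose j : ℕ):ℝ)/((j:ℝ)+1) := by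
    have : (N:ℝ)+1 ≠ 0 := by positivity
    field_simp
  rw [h2, div_mul_eq_mul_div, div_eq_div_iff hN'.ne' hj1.ne', hkj]
  ring

lemma mpeRaney_one_succ (k j : ℕ) :
    mpeRaney k 1 (j+1) = ((k*(j+1)).choose j : ℝ) / ((j:ℝ)+1) := by
  rw [mpeRaney_eq k 1 (j+1) le_rfl]
  have hid := Nat.add_one_mul_choose_eq (k*(j+1)) j
  have h1 : (0:ℝ) < ((k*(j+1)+1 : ℕ) : ℝ) := by exact_mod_cast Nat.succ_pos _
  have h2 : (0:ℝ) < (j:ℝ)+1 := by positivity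
  rw [Nat.cast_one, one_div_mul_eq_div, div_eq_div_iff h1.ne' h2.ne']
  have : (((k*(j+1)+1).choose (j+1) * (j+1) : ℕ) : ℝ)
      = (((k*(j+1)).choose j * (k*(j+1)+1) : ℕ) : ℝ) := by
    rw [← hid]; push_cast; ring
  push_cast at this ⊢
  linarith

/-! ### The candidate total-progeny mass function and its convolutions -/

noncomputable def mpeQ (k : ℕ) (p : ℝ) (j : ℕ) : ℝ :=
  if j = 0 then 0 else p^(j-1) * (1-p)^((k-1)*j+1) * mpeRaney k 1 j

noncomputable def mpeQconv (k : ℕ) (p : ℝ) : ℕ → ℕ → ℝ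
  | 0, n => if n = 0 then 1 else 0
  | m+1, n => ∑ i ∈ Finset.range (n+1), mpeQconv k p m i * mpeQ k p (n - i)

section
variable {k : ℕ} {p : ℝ}

lemma mpeQ_nonneg (hp0 : 0 ≤ p) (hp1 : p ≤ 1) (j : ℕ) : 0 ≤ mpeQ k p j := by
  unfold mpeQ; split
  · exact le_rfl
  · have := mpeRaney_nonneg k 1 j
    have h1 : (0:ℝ) ≤ 1 - p := by linarith
    positivity

lemma mpeQconv_nonneg (hp0 : 0 ≤ p) (hp1 : p ≤ 1) : ∀ m n, 0 ≤ mpeQconv k p m n := by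
  intro m
  induction m with
  | zero => intro n; simp only [mpeQconv]; split <;> norm_num
  | succ m ihm =>
    intro n
    simp only [mpeQconv]
    exact Finset.sum_nonneg fun i _ => mul_nonneg (ihm i) (mpeQ_nonneg hp0 hp1 _)

lemma mpeQ_eq (hp0 : p ≠ 0) (b : ℕ) :
    mpeQ k p b = ((1-p)/p) * (p*(1-p)^(k-1))^b * mpeU k b := by
  unfold mpeQ
  rw [mpeU_def]
  split
  · simp
  · rename_i hb
    obtain ⟨b', rfl⟩ : ∃ b', b = b' + 1 := ⟨b - 1, by omega⟩
    rw [mul_pow, ← pow_mul]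
    rw [pow_succ (1-p) ((k-1)*(b'+1)), pow_succ p b']
    simp only [Nat.add_sub_cancel]
    field_simp

lemma mpeQconv_eq (hk : 1 ≤ k) (hp0 : p ≠ 0) :
    ∀ m n, mpeQconv k p m n
      = ((1-p)/p)^m * (p*(1-p)^(k-1))^n * mpeUconv k m n := by
  intro m
  induction m with
  | zero =>
    intro n
    rw [mpeUconv_zero]
    simp only [mpeQconv, pow_zero, one_mul]
    split
    · rename_i h; subst h; simp
    · simp
  | succ m ihm =>
    intro n
    simp only [mpeQconv]
    rw [mpeUconv_succ, Finset.mul_sum]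
    apply Finset.sum_congr rfl
    intro i hi
    have hi' : i ≤ n := by have := Finset.mem_range.mp hi; omega
    rw [ihm i, mpeQ_eq hp0 (n - i)]
    have hx : (p*(1-p)^(k-1))^i * (p*(1-p)^(k-1))^(n-i) = (p*(1-p)^(k-1))^n := by
      rw [← pow_add]; congr 1; omega
    calc ((1-p)/p)^m * (p*(1-p)^(k-1))^i * mpeUconv k m i *
          ((1-p)/p * (p*(1-p)^(k-1))^(n-i) * mpeU k (n-i))
        = ((1-p)/p)^(m+1) * ((p*(1-p)^(k-1))^i * (p*(1-p)^(k-1))^(n-i))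
            * (mpeUconv k m i * mpeU k (n-i)) := by ring
      _ = ((1-p)/p)^(m+1) * (p*(1-p)^(k-1))^n * (mpeUconv k m i * mpeU k (n-i)) := by rw [hx]

lemma mpe_real_id (hk : 1 ≤ k) (hp0 : 0 < p) (j : ℕ) :
    ∑ m ∈ Finset.range (k+1),
      (k.choose m : ℝ) * p^m * (1-p)^(k-m) * mpeQconv k p m j = mpeQ k p (j+1) := by
  have hstep : ∀ m ∈ Finset.range (k+1),
      (k.choose m : ℝ) * p^m * (1-p)^(k-m) * mpeQconv k p m j
      = (1-p)^k * (p*(1-p)^(k-1))^j * ((k.choose m : ℝ) * mpeUconv k m j) := by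
    intro m hm
    have hm' : m ≤ k := by have := Finset.mem_range.mp hm; omega
    rw [mpeQconv_eq hk hp0.ne' m j]
    have h1 : p^m * ((1-p)/p)^m = (1-p)^m := by
      rw [← mul_pow, mul_div_cancel₀ _ hp0.ne']
    have h2 : (1-p)^(k-m) * (1-p)^m = (1-p)^k := by
      rw [← pow_add]; congr 1; omega
    calc (k.choose m : ℝ) * p^m * (1-p)^(k-m) * (((1-p)/p)^m * (p*(1-p)^(k-1))^j * mpeUconv k m j)
        = ((1-p)^(k-m) * (p^m * ((1-p)/p)^m)) * (p*(1-p)^(k-1))^j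
            * ((k.choose m : ℝ) * mpeUconv k m j) := by ring
      _ = _ := by rw [h1, h2]
  rw [Finset.sum_congr rfl hstep, ← Finset.mul_sum, mpe_sum_choose_uconv k j hk]
  unfold mpeQ
  rw [if_neg (Nat.succ_ne_zero j)]
  rw [mul_pow, ← pow_mul]
  simp only [Nat.add_sub_cancel]
  rw [show (k-1)*(j+1)+1 = (k-1)*j + k by have := hk; rw [Nat.mul_succ]; omega, pow_add]
  ring

/-! ### PMF computations -/

lemma mpe_map_succ (ν : PMF ℕ) (j : ℕ) : (ν.map (· + 1)) (j+1) = ν j := by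
  rw [PMF.map_apply]
  rw [tsum_eq_single j ?_]
  · simp
  · intro b hb; rw [if_neg (by omega)]

lemma mpe_map_zero (ν : PMF ℕ) : (ν.map (· + 1)) 0 = 0 := by
  rw [PMF.map_apply]
  convert tsum_zero (α := ℝ≥0∞) (β := ℕ) with b
  rw [if_neg (by omega)]

lemma mpe_map_shift (τ : PMF ℕ) (t n : ℕ) :
    (τ.map (t + ·)) n = if t ≤ n then τ (n - t) else 0 := by
  rw [PMF.map_apply]
  split
  · rename_i h
    rw [tsum_eq_single (n - t) ?_]
    · rw [if_pos (by omega)]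
    · intro b hb; rw [if_neg (by omega)]
  · rename_i h
    convert tsum_zero (α := ℝ≥0∞) (β := ℕ) with b
    rw [if_neg (by omega)]

lemma mpe_iidSum_succ_apply (τ : PMF ℕ) (m n : ℕ) :
    (iidSum τ (m+1)) n = ∑ i ∈ Finset.range (n+1), (iidSum τ m) i * τ (n - i) := by
  show ((iidSum τ m).bind fun t => τ.map (t + ·)) n = _
  rw [PMF.bind_apply]
  have h1 : ∀ t : ℕ, (iidSum τ m) t * (τ.map (t + ·)) n
      = if t ∈ Finset.range (n+1) then (iidSum τ m) t * τ (n - t) else 0 := by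
    intro t
    rw [mpe_map_shift]
    by_cases ht : t ≤ n
    · rw [if_pos ht, if_pos (Finset.mem_range.mpr (by omega))]
    · rw [if_neg ht, if_neg (by simp [Finset.mem_range]; omega), mul_zero]
  rw [tsum_congr h1, tsum_eq_sum (s := Finset.range (n+1)) ?_]
  · exact Finset.sum_congr rfl fun i hi => if_pos hi
  · intro b hb; exact if_neg hb

lemma mpe_iidSum_eq (τ : PMF ℕ) (hp0 : 0 ≤ p) (hp1 : p ≤ 1) :
    ∀ m n, (∀ i, i ≤ n → τ i = ENNReal.ofReal (mpeQ k p i)) →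
      (iidSum τ m) n = ENNReal.ofReal (mpeQconv k p m n) := by
  intro m
  induction m with
  | zero =>
    intro n _
    show (PMF.pure 0) n = _
    rw [PMF.pure_apply]
    simp only [mpeQconv]
    split <;> simp
  | succ m ihm =>
    intro n hval
    rw [mpe_iidSum_succ_apply]
    have h1 : ∀ i ∈ Finset.range (n+1), (iidSum τ m) i * τ (n-i)
        = ENNReal.ofReal (mpeQconv k p m i * mpeQ k p (n-i)) := by
      intro i hi
      have hi' : i ≤ n := by have := Finset.mem_range.mp hi; omega
      rw [ihm i (fun i' h => hval i' (le_trans h hi')), hval (n-i) (by omega),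
        ← ENNReal.ofReal_mul (mpeQconv_nonneg hp0 hp1 m i)]
    rw [Finset.sum_congr rfl h1,
      ← ENNReal.ofReal_sum_of_nonneg (fun i _ =>
        mul_nonneg (mpeQconv_nonneg hp0 hp1 m i) (mpeQ_nonneg hp0 hp1 _))]
    congr 1

lemma mpe_binomial_apply (hp0 : 0 ≤ p) (hp1 : p ≤ 1) (hple : ENNReal.ofReal p ≤ 1)
    (i : Fin (k+1)) :
    PMF.binomial (ENNReal.ofReal p).toNNReal
          (by simpa using ENNReal.toNNReal_mono ENNReal.one_ne_top hple) k i
      = ENNReal.ofReal ((k.choose (i:ℕ) : ℝ) * p^(i:ℕ) * (1-p)^(k-(i:ℕ))) := by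
  generalize_proofs hh
  rw [PMF.binomial_apply]
  have hq : ((ENNReal.ofReal p).toNNReal : ℝ≥0∞) = ENNReal.ofReal p :=
    ENNReal.coe_toNNReal ENNReal.ofReal_ne_top
  push_cast [ENNReal.coe_sub, hq]
  have hsub : (1 : ℝ≥0∞) - ENNReal.ofReal p = ENNReal.ofReal (1-p) := by
    rw [← ENNReal.ofReal_one, ← ENNReal.ofReal_sub _ hp0]
  have h1p : (0:ℝ) ≤ 1 - p := by linarith
  rw [hsub, ← ENNReal.ofReal_pow hp0, ← ENNReal.ofReal_pow h1p,
    ← ENNReal.ofReal_natCast (k.choose (i:ℕ)),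
    ← ENNReal.ofReal_mul (pow_nonneg hp0 _),
    ← ENNReal.ofReal_mul (mul_nonneg (pow_nonneg hp0 _) (pow_nonneg h1p _))]
  congr 1
  ring
end

lemma mpe_master (k : ℕ) (hk : 1 ≤ k) (p : ℝ) (hp0 : 0 < p) (hp1 : p < 1)
    (hple : ENNReal.ofReal p ≤ 1) (τ : PMF ℕ)
    (hτ : τ = (((PMF.binomial (ENNReal.ofReal p).toNNReal
          (by simpa using ENNReal.toNNReal_mono ENNReal.one_ne_top hple) k).map Fin.val).bind
        (iidSum τ)).map (· + 1)) :
    ∀ j, τ j = ENNReal.ofReal (mpeQ k p j) := by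
  intro j
  induction j using Nat.strong_induction_on with
  | _ j ih =>
    cases j with
    | zero =>
      conv_lhs => rw [hτ]
      rw [mpe_map_zero]
      simp [mpeQ]
    | succ j =>
      conv_lhs => rw [hτ]
      rw [mpe_map_succ, PMF.bind_map, PMF.bind_apply, tsum_fintype]
      have hterm : ∀ i : Fin (k+1),
          PMF.binomial (ENNReal.ofReal p).toNNReal
          (by simpa using ENNReal.toNNReal_mono ENNReal.one_ne_top hple) k i * ((iidSum τ ∘ Fin.val) i) j
          = (fun m => ENNReal.ofReal
              ((k.choose m : ℝ) * p^m * (1-p)^(k-m) * mpeQconv k p m j)) (i : ℕ) := by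
        intro i
        have hnnA : (0:ℝ) ≤ (k.choose (i:ℕ) : ℝ) * p^(i:ℕ) * (1-p)^(k-(i:ℕ)) := by
          have h1 : (0:ℝ) ≤ 1 - p := by linarith
          positivity
        simp only [Function.comp_apply]
        rw [mpe_binomial_apply hp0.le hp1.le hple i,
          mpe_iidSum_eq (k := k) (p := p) τ hp0.le hp1.le (i:ℕ) j
            (fun i' hi' => ih i' (by omega)),
          ← ENNReal.ofReal_mul hnnA]
      have hfin := Fin.sum_univ_eq_sum_range
        (fun m => ENNReal.ofReal ((k.choose m : ℝ) * p^m * (1-p)^(k-m) * mpeQconv k p m j)) (k+1)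
      rw [Finset.sum_congr rfl (fun i _ => hterm i), hfin,
        ← ENNReal.ofReal_sum_of_nonneg (fun m _ => by
          have h1 : (0:ℝ) ≤ 1 - p := by linarith
          exact mul_nonneg (by positivity) (mpeQconv_nonneg hp0.le hp1.le m j)),
        mpe_real_id hk hp0 j]

/-- for the subcritical branching process with offspring `Binomial(k,p)`
(`kp < 1`), the total progeny `T_s` (characterized by `T_s = 1 + Σ_{i≤offspring} T_s^{(i)}`)
satisfies `P(T_s = j) = (1/j) C(kj, j-1) p^{j-1} (1-p)^{(k-1)j+1}` for all `j ≥ 1`. -/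
theorem mpe_progeny_dist_binomial (k : ℕ) (hk : 1 ≤ k)
    (p : ℝ) (hp0 : 0 < p) (hp1 : p < 1) (hple : ENNReal.ofReal p ≤ 1)
    (hkp : (k : ℝ) * p < 1)
    (τ : PMF ℕ)
    (hτ : τ = (((PMF.binomial (ENNReal.ofReal p).toNNReal
          (by simpa using ENNReal.toNNReal_mono ENNReal.one_ne_top hple) k).map Fin.val).bind
        (iidSum τ)).map (· + 1)) :
    ∀ j : ℕ, 1 ≤ j →
      (τ j).toReal = (1 / (j : ℝ)) * (Nat.choose (k * j) (j - 1) : ℝ) * p ^ (j - 1)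
        * (1 - p) ^ ((k - 1) * j + 1) := by
  intro j hj
  obtain ⟨j', rfl⟩ : ∃ j'', j = j'' + 1 := ⟨j - 1, by omega⟩
  rw [mpe_master k hk p hp0 hp1 hple τ hτ (j'+1),
    ENNReal.toReal_ofReal (mpeQ_nonneg hp0.le hp1.le _)]
  unfold mpeQ
  rw [if_neg (Nat.succ_ne_zero j'), mpeRaney_one_succ]
  simp only [Nat.add_sub_cancel]
  have : ((j':ℝ)+1) ≠ 0 := by positivity
  push_cast
  field_simp
end

section
/- Let ξ be a nonnegative integer-valued random variable with finite mean and pgf G_ξ, p ∈ (0,1), Y geometric with P(Y = i) = (1-p)p^i independent of ξ, and X = min(Y,ξ). Then the probability generating function of X is g₂(s) = (1-p)·Σ_{k≥0} (sp)^k P(ξ ≥ k) + p·G_ξ(sp), for s ∈ [0,1]. -/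
open scoped ENNReal

set_option maxHeartbeats 1000000

private lemma pgf_toReal (μ : PMF ℕ) (t : ℝ) (ht : 0 ≤ t) :
    pmfPgf μ t = (∑' k, μ k * ENNReal.ofReal t ^ k).toReal := by
  rw [pmfPgf, ENNReal.tsum_toReal_eq (fun k => ENNReal.mul_ne_top (μ.apply_ne_top k)
    (by rw [← ENNReal.ofReal_pow ht]; exact ENNReal.ofReal_ne_top))]
  congr 1; funext k
  rw [ENNReal.toReal_mul, ← ENNReal.ofReal_pow ht, ENNReal.toReal_ofReal (pow_nonneg ht k)]

private lemma map_pgfE (Y : PMF ℕ) (g : ℕ → ℕ) (r : ℝ≥0∞) :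
    ∑' k, (Y.map g) k * r ^ k = ∑' y, Y y * r ^ (g y) := by
  simp only [PMF.map_apply, ENNReal.tsum_mul_right.symm, ite_mul, zero_mul]
  rw [ENNReal.tsum_comm]
  congr 1; funext y
  have : ∀ k : ℕ, (if k = g y then Y y * r ^ k else 0)
      = (if k = g y then Y y * r ^ (g y) else 0) := by
    intro k; by_cases h : k = g y <;> simp [h]
  simp_rw [this]
  exact tsum_ite_eq (g y) _

private lemma bind_pgfE (ξ : PMF ℕ) (f : ℕ → PMF ℕ) (r : ℝ≥0∞) :
    ∑' k, (ξ.bind f) k * r ^ k = ∑' n, ξ n * ∑' k, f n k * r ^ k := by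
  simp only [PMF.bind_apply, ENNReal.tsum_mul_right.symm, mul_assoc]
  rw [ENNReal.tsum_comm]
  congr 1; funext n
  exact ENNReal.tsum_mul_left

private lemma combineE (a b x S t : ℝ≥0∞) (hab : a + b = 1) :
    x * (a * S + t) = a * (x * (S + t)) + b * (x * t) := by
  have h : a * (x * (S + t)) + b * (x * t) = x * (a * S + (a + b) * t) := by ring
  rw [h, hab, one_mul]

/-- with `Y` geometric (`P(Y=i)=(1-p)pⁱ`), independent of `ξ`, and
`X = min(Y,ξ)`, the pgf of `X` is `g₂(s) = (1-p)·Σ_{k≥0}(sp)^k P(ξ ≥ k) + p·G_ξ(sp)`. -/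
theorem truncGeom_pgf (p : ℝ) (hp0 : 0 < p) (hp1 : p < 1)
    (ξ Y : PMF ℕ) (hY : ∀ i : ℕ, Y i = ENNReal.ofReal ((1 - p) * p ^ i))
    (hmean : pmfMean ξ ≠ ⊤)
    (s : ℝ) (hs : s ∈ Set.Icc (0 : ℝ) 1) :
    pmfPgf (ξ.bind fun n => Y.map fun y => min y n) s
      = (1 - p) * ∑' k : ℕ, (s * p) ^ k * (pmfTail ξ k).toReal + p * pmfPgf ξ (s * p) := by
  obtain ⟨hs0, hs1⟩ := hs
  have hp0' : (0:ℝ) ≤ p := hp0.le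
  have h1p : (0:ℝ) ≤ 1 - p := by linarith
  have hsp0 : (0:ℝ) ≤ s * p := mul_nonneg hs0 hp0'
  -- notation
  set pp : ℝ≥0∞ := ENNReal.ofReal p with hppdef
  set r : ℝ≥0∞ := ENNReal.ofReal s with hrdef
  set q : ℝ≥0∞ := ENNReal.ofReal (s * p) with hqdef
  have hq : q = r * pp := ENNReal.ofReal_mul hs0
  have hq1 : q < 1 := by
    rw [show (1:ℝ≥0∞) = ENNReal.ofReal 1 by simp]
    exact ENNReal.ofReal_lt_ofReal_iff (by norm_num) |>.2 (by nlinarith)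
  have hqle1 : q ≤ 1 := hq1.le
  have hYE : ∀ y : ℕ, Y y = ENNReal.ofReal (1 - p) * pp ^ y := by
    intro y; rw [hY, ENNReal.ofReal_mul h1p, ENNReal.ofReal_pow hp0']
  have hsum1 : ENNReal.ofReal (1 - p) + pp = 1 := by
    rw [← ENNReal.ofReal_add h1p hp0']; norm_num
  -- geometric tail of Y
  have hYtail : ∀ n : ℕ, (∑' j : ℕ, Y (j + n)) = pp ^ n := by
    intro n
    have h1 : ∀ j : ℕ, Y (j + n) = pp ^ n * Y j := by
      intro j; rw [hYE, hYE, pow_add]; ring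
    simp_rw [h1]
    rw [ENNReal.tsum_mul_left, PMF.tsum_coe, mul_one]
  -- coefficient of ξ n
  have hcoef : ∀ n : ℕ, (∑' y : ℕ, Y y * r ^ (min y n))
      = ENNReal.ofReal (1 - p) * ∑ y ∈ Finset.range n, q ^ y + q ^ n := by
    intro n
    rw [show (∑' y : ℕ, Y y * r ^ (min y n)) = ∑ y ∈ Finset.range n, Y y * r ^ (min y n)
        + ∑' j : ℕ, Y (j + n) * r ^ (min (j + n) n) from
      (Summable.sum_add_tsum_nat_add' ENNReal.summable).symm]
    congr 1
    · rw [Finset.mul_sum]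
      refine Finset.sum_congr rfl fun y hy => ?_
      rw [min_eq_left (Finset.mem_range.1 hy).le, hYE, hq, mul_pow]; ring
    · have h2 : ∀ j : ℕ, Y (j + n) * r ^ (min (j + n) n) = Y (j + n) * r ^ n := by
        intro j; rw [min_eq_right (Nat.le_add_left n j)]
      simp_rw [h2]
      rw [ENNReal.tsum_mul_right, hYtail, hq, mul_pow, mul_comm]
  -- tail sum rearrangement
  have hS1 : (∑' k : ℕ, q ^ k * pmfTail ξ k)
      = ∑' n : ℕ, ξ n * ∑ k ∈ Finset.range (n + 1), q ^ k := by
    simp only [pmfTail, ENNReal.tsum_mul_left.symm, mul_ite, mul_zero]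
    rw [ENNReal.tsum_comm]
    congr 1; funext n
    have h3 : (∑' k : ℕ, if k ≤ n then q ^ k * ξ n else 0)
        = ∑ k ∈ Finset.range (n + 1), q ^ k * ξ n := by
      rw [tsum_eq_sum (s := Finset.range (n + 1)) (by
        intro k hk
        rw [if_neg]; simpa [Nat.lt_succ_iff] using hk)]
      refine Finset.sum_congr rfl fun k hk => ?_
      rw [if_pos (Nat.lt_succ_iff.1 (Finset.mem_range.1 hk))]
    rw [h3, ← Finset.sum_mul, mul_comm]
  -- finiteness
  have htail_le : ∀ k, pmfTail ξ k ≤ 1 := by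
    intro k
    rw [← PMF.tsum_coe ξ, pmfTail]
    exact ENNReal.tsum_le_tsum (fun n => by split_ifs <;> simp)
  have htail_ne : ∀ k, pmfTail ξ k ≠ ⊤ := fun k =>
    ne_top_of_le_ne_top ENNReal.one_ne_top (htail_le k)
  have hgeo_ne : (∑' k : ℕ, q ^ k) ≠ ⊤ := by
    rw [ENNReal.tsum_geometric]
    exact ENNReal.inv_ne_top.2 (fun h => hq1.not_ge (tsub_eq_zero_iff_le.1 h))
  have hS1fin : (∑' k : ℕ, q ^ k * pmfTail ξ k) ≠ ⊤ := by
    refine ne_top_of_le_ne_top hgeo_ne ?_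
    calc (∑' k : ℕ, q ^ k * pmfTail ξ k) ≤ ∑' k : ℕ, q ^ k * 1 :=
          ENNReal.tsum_le_tsum (fun k => mul_le_mul_right (htail_le k) _)
      _ = ∑' k : ℕ, q ^ k := by simp
  have hS2fin : (∑' n : ℕ, ξ n * q ^ n) ≠ ⊤ := by
    refine ne_top_of_le_ne_top ENNReal.one_ne_top ?_
    calc (∑' n : ℕ, ξ n * q ^ n) ≤ ∑' n : ℕ, ξ n * 1 :=
          ENNReal.tsum_le_tsum (fun n => mul_le_mul_right (pow_le_one' hqle1 n) _)
      _ = 1 := by simpa using ξ.tsum_coe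
  -- the key ENNReal identity
  have key : (∑' k : ℕ, (ξ.bind fun n => Y.map fun y => min y n) k * r ^ k)
      = ENNReal.ofReal (1 - p) * (∑' k : ℕ, q ^ k * pmfTail ξ k)
        + pp * (∑' n : ℕ, ξ n * q ^ n) := by
    rw [bind_pgfE]
    simp_rw [map_pgfE, hcoef]
    rw [hS1, ← ENNReal.tsum_mul_left, ← ENNReal.tsum_mul_left, ← ENNReal.tsum_add]
    congr 1; funext n
    rw [Finset.sum_range_succ]
    exact combineE _ _ _ _ _ hsum1
  -- assemble
  rw [pgf_toReal _ s hs0, key,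
    ENNReal.toReal_add (ENNReal.mul_ne_top ENNReal.ofReal_ne_top hS1fin)
      (ENNReal.mul_ne_top ENNReal.ofReal_ne_top hS2fin),
    ENNReal.toReal_mul, ENNReal.toReal_mul, ENNReal.toReal_ofReal h1p,
    ENNReal.toReal_ofReal hp0']
  congr 1
  · congr 1
    rw [ENNReal.tsum_toReal_eq (fun k => ENNReal.mul_ne_top
      (by rw [← ENNReal.ofReal_pow hsp0]; exact ENNReal.ofReal_ne_top) (htail_ne k))]
    congr 1; funext k
    rw [ENNReal.toReal_mul, ← ENNReal.ofReal_pow hsp0, ENNReal.toReal_ofReal (pow_nonneg hsp0 k)]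
  · rw [pgf_toReal ξ (s * p) hsp0]
end

section
/- Consider the branching process with offspring distribution X = min(Y, ξ) where Y is geometric with P(Y=i)=(1-p)p^i independent of ξ (the (p,ξ)-MAE model), started from one individual. The survival probability θ₂(p,ξ) is positive if and only if Σ_{x≥1} x p^x P(ξ ≥ x) > (1 - p·E(ξ p^ξ))/(1-p). -/
open scoped ENNReal

/-- ENNReal pgf -/
noncomputable def pgfE (μ : PMF ℕ) (s : ℝ≥0∞) : ℝ≥0∞ := ∑' k : ℕ, μ k * s ^ k

lemma tsum_map_mul (ν : PMF ℕ) (g : ℕ → ℕ) (h : ℕ → ℝ≥0∞) :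
    ∑' j, (ν.map g) j * h j = ∑' y, ν y * h (g y) := by
  have : ∀ j, (ν.map g) j * h j = ∑' y, if j = g y then ν y * h j else 0 := by
    intro j
    rw [PMF.map_apply, ← ENNReal.tsum_mul_right]
    exact tsum_congr fun y => by split <;> simp
  rw [tsum_congr this, ENNReal.tsum_comm]
  congr 1; ext y
  rw [tsum_eq_single (g y) (by intro j hj; simp [hj])]
  simp

lemma tsum_bind_mul (ν : PMF ℕ) (κ : ℕ → PMF ℕ) (h : ℕ → ℝ≥0∞) :
    ∑' j, (ν.bind κ) j * h j = ∑' n, ν n * ∑' j, κ n j * h j := by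
  have : ∀ j, (ν.bind κ) j * h j = ∑' n, ν n * (κ n j * h j) := by
    intro j
    rw [PMF.bind_apply, ← ENNReal.tsum_mul_right]
    exact tsum_congr fun n => by ring
  rw [tsum_congr this, ENNReal.tsum_comm]
  congr 1; ext n
  rw [ENNReal.tsum_mul_left]

lemma pgfE_iidSum (μ : PMF ℕ) (s : ℝ≥0∞) : ∀ k, ∑' j, iidSum μ k j * s ^ j = (pgfE μ s) ^ k := by
  intro k
  induction k with
  | zero =>
    rw [show iidSum μ 0 = PMF.pure 0 from rfl, pow_zero]
    rw [tsum_eq_single 0 (by intro j hj; simp [PMF.pure_apply, hj])]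
    simp
  | succ k ih =>
    rw [show iidSum μ (k+1) = (iidSum μ k).bind fun t => μ.map (t + ·) from rfl]
    rw [tsum_bind_mul]
    have : ∀ t : ℕ, ∑' j, (μ.map (t + ·)) j * s ^ j = s ^ t * pgfE μ s := by
      intro t
      rw [tsum_map_mul, show s ^ t * pgfE μ s = ∑' y, s ^ t * (μ y * s ^ y) from
        (ENNReal.tsum_mul_left).symm]
      exact tsum_congr fun y => by rw [pow_add]; ring
    rw [tsum_congr fun t => by rw [this t]]
    rw [tsum_congr fun t => by rw [← mul_assoc], ENNReal.tsum_mul_right, ih, pow_succ]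

lemma pgfE_gwGen (μ : PMF ℕ) (gw : ℕ → PMF ℕ)
    (hgw0 : gw 0 = PMF.pure 1) (hgwS : ∀ n, gw (n+1) = (gw n).bind (iidSum μ)) :
    ∀ n s, ∑' j, gw n j * s ^ j = (pgfE μ)^[n] s := by
  intro n
  induction n with
  | zero =>
    intro s
    rw [hgw0, Function.iterate_zero_apply]
    rw [tsum_eq_single 1 (by intro j hj; simp [PMF.pure_apply, hj])]
    simp
  | succ n ih =>
    intro s
    rw [hgwS, tsum_bind_mul, tsum_congr fun k => by rw [pgfE_iidSum], ih,
      Function.iterate_succ_apply]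

lemma pgfE_mono (μ : PMF ℕ) : Monotone (pgfE μ) := by
  intro s t hst
  exact ENNReal.tsum_le_tsum fun k => mul_le_mul_right (pow_le_pow_left' hst k) _

lemma pgfE_one (μ : PMF ℕ) : pgfE μ 1 = 1 := by
  simpa [pgfE] using μ.tsum_coe

lemma summable_q (μ : PMF ℕ) : Summable (fun k => (μ k).toReal) :=
  ENNReal.summable_toReal μ.tsum_coe_ne_top

lemma tsum_q (μ : PMF ℕ) : ∑' k, (μ k).toReal = 1 := by
  rw [← ENNReal.tsum_toReal_eq fun k => μ.apply_ne_top k, μ.tsum_coe, ENNReal.toReal_one]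

lemma summable_qs (μ : PMF ℕ) {s : ℝ} (h0 : 0 ≤ s) (h1 : s ≤ 1) :
    Summable (fun k => (μ k).toReal * s ^ k) := by
  apply Summable.of_nonneg_of_le (fun k => by positivity) (fun k => ?_) (summable_q μ)
  calc (μ k).toReal * s ^ k ≤ (μ k).toReal * 1 := by
        exact mul_le_mul_of_nonneg_left (pow_le_one₀ h0 h1) ENNReal.toReal_nonneg
    _ = (μ k).toReal := mul_one _

lemma pgfE_ofReal (μ : PMF ℕ) {s : ℝ} (h0 : 0 ≤ s) (h1 : s ≤ 1) :
    pgfE μ (ENNReal.ofReal s) = ENNReal.ofReal (pmfPgf μ s) := by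
  rw [pmfPgf, ENNReal.ofReal_tsum_of_nonneg (fun k => by positivity) (summable_qs μ h0 h1)]
  refine tsum_congr fun k => ?_
  rw [ENNReal.ofReal_mul ENNReal.toReal_nonneg, ENNReal.ofReal_toReal (μ.apply_ne_top k),
    ← ENNReal.ofReal_pow h0]

lemma pmfPgf_nonneg (μ : PMF ℕ) {s : ℝ} (h0 : 0 ≤ s) : 0 ≤ pmfPgf μ s :=
  tsum_nonneg fun k => by positivity

lemma pmfPgf_le_one (μ : PMF ℕ) {s : ℝ} (h0 : 0 ≤ s) (h1 : s ≤ 1) : pmfPgf μ s ≤ 1 := by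
  rw [← tsum_q μ]
  refine Summable.tsum_le_tsum (fun k => ?_) (summable_qs μ h0 h1) (summable_q μ)
  calc (μ k).toReal * s ^ k ≤ (μ k).toReal * 1 :=
        mul_le_mul_of_nonneg_left (pow_le_one₀ h0 h1) ENNReal.toReal_nonneg
    _ = (μ k).toReal := mul_one _

lemma pmfPgf_continuousOn (μ : PMF ℕ) : ContinuousOn (pmfPgf μ) (Set.Icc 0 1) := by
  apply continuousOn_tsum (u := fun k => (μ k).toReal)
    (fun k => (continuous_const.mul (continuous_pow k)).continuousOn) (summable_q μ)
  intro k x hx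
  simp only [Pi.mul_apply]
  rw [Real.norm_eq_abs, abs_mul, abs_of_nonneg (ENNReal.toReal_nonneg),
    abs_pow]
  calc (μ k).toReal * |x| ^ k ≤ (μ k).toReal * 1 := by
        refine mul_le_mul_of_nonneg_left (pow_le_one₀ (abs_nonneg x) ?_) ENNReal.toReal_nonneg
        rw [abs_le]; exact ⟨by linarith [hx.1], hx.2⟩
    _ = (μ k).toReal := mul_one _

lemma one_sub_pgf (μ : PMF ℕ) {s : ℝ} (h0 : 0 ≤ s) (h1 : s ≤ 1) :
    1 - pmfPgf μ s = ∑' k, (μ k).toReal * (1 - s ^ k) := by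
  rw [tsum_congr fun k => (mul_one_sub ((μ k).toReal) (s ^ k)),
    Summable.tsum_sub (summable_q μ) (summable_qs μ h0 h1)]
  simp [tsum_q μ, pmfPgf]

lemma pmfPgf_zero (μ : PMF ℕ) : pmfPgf μ 0 = (μ 0).toReal := by
  rw [pmfPgf, tsum_eq_single 0 (by intro k hk; simp [zero_pow hk])]
  simp

lemma pmfPgf_one (μ : PMF ℕ) : pmfPgf μ 1 = 1 := by
  simp [pmfPgf, tsum_q μ]

lemma supercrit_fixed (μ : PMF ℕ) (h0 : 0 < μ 0)
    (hm : 1 < ∑' k : ℕ, (k : ℝ≥0∞) * μ k) :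
    ∃ q : ℝ, 0 ≤ q ∧ q < 1 ∧ pmfPgf μ q = q := by
  -- truncation
  obtain ⟨F, hF⟩ := lt_iSup_iff.mp (by rwa [ENNReal.tsum_eq_iSup_sum] at hm)
  set N := F.sup id + 1 with hN
  have hFN : F ⊆ Finset.range N := by
    intro k hk
    exact Finset.mem_range.mpr (Nat.lt_succ_of_le (Finset.le_sup (f := id) hk))
  have hN' : (1 : ℝ≥0∞) < ∑ k ∈ Finset.range N, (k : ℝ≥0∞) * μ k :=
    lt_of_lt_of_le hF (Finset.sum_le_sum_of_subset hFN)
  have hne : (∑ k ∈ Finset.range N, (k : ℝ≥0∞) * μ k) ≠ ⊤ :=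
    ENNReal.sum_ne_top.mpr fun k _ => ENNReal.mul_ne_top (ENNReal.natCast_ne_top k)
      (μ.apply_ne_top k)
  have hNr : (1 : ℝ) < ∑ k ∈ Finset.range N, (k : ℝ) * (μ k).toReal := by
    have := ENNReal.toReal_strict_mono hne hN'
    rw [ENNReal.toReal_one, ENNReal.toReal_sum (fun k _ => ENNReal.mul_ne_top
      (ENNReal.natCast_ne_top k) (μ.apply_ne_top k))] at this
    simpa [ENNReal.toReal_mul] using this
  -- continuity of truncated sum
  set φ : ℝ → ℝ := fun s => ∑ k ∈ Finset.range N, (μ k).toReal * (∑ j ∈ Finset.range k, s ^ j)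
    with hφ
  have hφc : Continuous φ := by
    apply continuous_finset_sum
    intro k _
    exact continuous_const.mul (continuous_finset_sum _ fun j _ => continuous_pow j)
  have hφ1 : 1 < φ 1 := by
    rw [hφ]
    simpa [mul_comm] using hNr
  have hev : ∀ᶠ s in nhds (1:ℝ), 1 < φ s := hφc.continuousAt.eventually_const_lt hφ1
  obtain ⟨δ, hδ, hball⟩ := Metric.eventually_nhds_iff.mp hev
  set s₀ : ℝ := max (1 - δ/2) (1/2) with hs₀
  have hs₀0 : (0:ℝ) ≤ s₀ := le_trans (by norm_num) (le_max_right _ _)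
  have hs₀1 : s₀ < 1 := by
    apply max_lt <;> [linarith; norm_num]
  have hφs₀ : 1 < φ s₀ := by
    apply hball
    rw [Real.dist_eq, abs_of_nonpos (by linarith)]
    have : 1 - δ/2 ≤ s₀ := le_max_left _ _
    linarith
  -- f s₀ < s₀
  have hpow : ∀ k : ℕ, s₀ ^ k ≤ 1 := fun k => pow_le_one₀ hs₀0 hs₀1.le
  have hsummable : Summable fun k => (μ k).toReal * (1 - s₀ ^ k) := by
    have := (summable_q μ).sub (summable_qs μ hs₀0 hs₀1.le)
    exact this.congr fun k => by ring
  have hkey : pmfPgf μ s₀ < s₀ := by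
    have h1 : 1 - pmfPgf μ s₀ = ∑' k, (μ k).toReal * (1 - s₀ ^ k) :=
      one_sub_pgf μ hs₀0 hs₀1.le
    have h2 : ∑ k ∈ Finset.range N, (μ k).toReal * (1 - s₀ ^ k)
        ≤ ∑' k, (μ k).toReal * (1 - s₀ ^ k) := by
      apply Summable.sum_le_tsum _ (fun k _ => ?_) hsummable
      have := hpow k
      have := ENNReal.toReal_nonneg (a := μ k)
      nlinarith
    have h3 : ∑ k ∈ Finset.range N, (μ k).toReal * (1 - s₀ ^ k) = (1 - s₀) * φ s₀ := by
      rw [hφ, Finset.mul_sum]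
      refine Finset.sum_congr rfl fun k _ => ?_
      have hg := geom_sum_mul s₀ k
      linear_combination (μ k).toReal * hg
    have h4 : (1 - s₀) * 1 < (1 - s₀) * φ s₀ :=
      mul_lt_mul_of_pos_left hφs₀ (by linarith)
    nlinarith
  -- IVT
  have hg0 : 0 < pmfPgf μ 0 - 0 := by
    rw [pmfPgf_zero, sub_zero]
    exact ENNReal.toReal_pos h0.ne' (μ.apply_ne_top 0)
  have hgs₀ : pmfPgf μ s₀ - s₀ < 0 := by linarith
  have hgc : ContinuousOn (fun s => pmfPgf μ s - s) (Set.Icc 0 s₀) := by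
    apply ContinuousOn.sub _ continuousOn_id
    exact (pmfPgf_continuousOn μ).mono (Set.Icc_subset_Icc le_rfl hs₀1.le)
  have h0mem : (0:ℝ) ∈ Set.Icc (pmfPgf μ s₀ - s₀) (pmfPgf μ 0 - 0) := ⟨hgs₀.le, hg0.le⟩
  obtain ⟨q, hqmem, hq⟩ := intermediate_value_Icc' hs₀0 hgc h0mem
  refine ⟨q, hqmem.1, lt_of_le_of_lt hqmem.2 hs₀1, by linarith [sub_eq_zero.mp hq]⟩

lemma exists_k0 (μ : PMF ℕ) (h01 : μ 0 + μ 1 < 1) : ∃ k0, 2 ≤ k0 ∧ 0 < (μ k0).toReal := by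
  by_contra h
  push_neg at h
  have hz : ∀ k, k ∉ ({0, 1} : Finset ℕ) → μ k = 0 := by
    intro k hk
    simp only [Finset.mem_insert, Finset.mem_singleton] at hk
    push_neg at hk
    have h2 : 2 ≤ k := by omega
    have := ENNReal.toReal_nonneg (a := μ k)
    have hle : (μ k).toReal = 0 := le_antisymm (h k h2) this
    rw [← ENNReal.ofReal_toReal (μ.apply_ne_top k), hle]
    simp
  have := μ.tsum_coe
  rw [tsum_eq_sum hz] at this
  simp [Finset.sum_insert, Finset.sum_singleton] at this
  rw [this] at h01
  exact lt_irrefl _ h01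

lemma subcrit_strict (μ : PMF ℕ) (h01 : μ 0 + μ 1 < 1)
    (hm : ∑' k : ℕ, (k : ℝ≥0∞) * μ k ≤ 1) :
    ∀ s : ℝ, 0 ≤ s → s < 1 → s < pmfPgf μ s := by
  obtain ⟨k0, hk02, hk0⟩ := exists_k0 μ h01
  have hmne : (∑' k : ℕ, (k : ℝ≥0∞) * μ k) ≠ ⊤ := (lt_of_le_of_lt hm ENNReal.one_lt_top).ne
  have hsumm : Summable fun k : ℕ => (k : ℝ) * (μ k).toReal := by
    have := ENNReal.summable_toReal hmne
    exact this.congr fun k => by simp [ENNReal.toReal_mul]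
  have hmr : ∑' k : ℕ, (k : ℝ) * (μ k).toReal ≤ 1 := by
    have h := ENNReal.toReal_mono (by simp) hm
    rw [ENNReal.tsum_toReal_eq (fun k => ENNReal.mul_ne_top (ENNReal.natCast_ne_top k)
      (μ.apply_ne_top k))] at h
    simpa [ENNReal.toReal_mul] using h
  intro s hs0 hs1
  have hpow : ∀ k : ℕ, s ^ k ≤ 1 := fun k => pow_le_one₀ hs0 hs1.le
  have hsummable : Summable fun k => (μ k).toReal * (1 - s ^ k) := by
    have := (summable_q μ).sub (summable_qs μ hs0 hs1.le)
    exact this.congr fun k => by ring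
  set c : ℝ := (1 - s) ^ 2 * (μ k0).toReal with hc
  have hcpos : 0 < c := by
    have h1s : (0:ℝ) < 1 - s := by linarith
    have h2 : (0:ℝ) < (1 - s) ^ 2 := pow_pos h1s 2
    exact mul_pos h2 hk0
  have hsummh : Summable fun k : ℕ =>
      (1 - s) * ((k : ℝ) * (μ k).toReal) - (if k = k0 then c else 0) := by
    apply Summable.sub (hsumm.mul_left _)
    exact summable_of_ne_finset_zero (s := {k0}) (fun k hk => by
      simp [Finset.mem_singleton] at hk; simp [hk])
  have hterm : ∀ k : ℕ, (μ k).toReal * (1 - s ^ k)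
      ≤ (1 - s) * ((k : ℝ) * (μ k).toReal) - (if k = k0 then c else 0) := by
    intro k
    have hgeom : 1 - s ^ k = (1 - s) * ∑ j ∈ Finset.range k, s ^ j := by
      have hg := geom_sum_mul s k
      linear_combination hg
    by_cases hk : k = k0
    · subst hk
      rw [if_pos rfl]
      have hb : ∑ j ∈ Finset.range k, s ^ j ≤ (k : ℝ) - (1 - s) := by
        have h1 : ∑ j ∈ Finset.range k, s ^ j
            ≤ ∑ j ∈ Finset.range k, (if j = 1 then s else 1) := by
          apply Finset.sum_le_sum
          intro j _
          by_cases hj : j = 1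
          · simp [hj]
          · simp [hj, hpow j]
        have h2 : ∑ j ∈ Finset.range k, (if j = 1 then s else 1)
            = (k : ℝ) - (1 - s) := by
          have h1mem : 1 ∈ Finset.range k := Finset.mem_range.mpr (by omega)
          have hsplit : ∀ j : ℕ, (if j = 1 then s else (1:ℝ))
              = 1 - (if j = 1 then 1 - s else 0) := by
            intro j; by_cases hj : j = 1 <;> simp [hj]
          rw [Finset.sum_congr rfl fun j _ => hsplit j, Finset.sum_sub_distrib,
            Finset.sum_ite_eq' (Finset.range k) 1 (fun _ => 1 - s), if_pos h1mem]
          simp [Finset.card_range]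
        linarith
      rw [hgeom, hc]
      have hq0 : (0:ℝ) ≤ (μ k).toReal := ENNReal.toReal_nonneg
      have h1s : (0:ℝ) ≤ 1 - s := by linarith
      nlinarith [mul_le_mul_of_nonneg_left hb (mul_nonneg hq0 h1s)]
    · simp only [if_neg hk, sub_zero]
      rw [hgeom]
      have hb : ∑ j ∈ Finset.range k, s ^ j ≤ (k : ℝ) := by
        calc ∑ j ∈ Finset.range k, s ^ j ≤ ∑ j ∈ Finset.range k, (1:ℝ) :=
              Finset.sum_le_sum fun j _ => hpow j
          _ = k := by simp
      have hq0 : (0:ℝ) ≤ (μ k).toReal := ENNReal.toReal_nonneg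
      have h1s : (0:ℝ) ≤ 1 - s := by linarith
      nlinarith [mul_le_mul_of_nonneg_left hb (mul_nonneg hq0 h1s)]
  have hle : ∑' k, (μ k).toReal * (1 - s ^ k)
      ≤ (1 - s) * (∑' k : ℕ, (k : ℝ) * (μ k).toReal) - c := by
    calc ∑' k, (μ k).toReal * (1 - s ^ k)
        ≤ ∑' k : ℕ, ((1 - s) * ((k : ℝ) * (μ k).toReal) - (if k = k0 then c else 0)) :=
          Summable.tsum_le_tsum hterm hsummable hsummh
      _ = (1 - s) * (∑' k : ℕ, (k : ℝ) * (μ k).toReal) - c := by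
          have hite : ∑' k : ℕ, (if k = k0 then c else 0) = c := tsum_ite_eq k0 (fun _ => c)
          rw [Summable.tsum_sub (hsumm.mul_left _) (summable_of_ne_finset_zero (s := {k0})
            (fun k hk => by simp [Finset.mem_singleton] at hk; simp [hk])),
            tsum_mul_left, hite]
  have h1 : 1 - pmfPgf μ s = ∑' k, (μ k).toReal * (1 - s ^ k) := one_sub_pgf μ hs0 hs1.le
  have : 1 - pmfPgf μ s ≤ (1 - s) * 1 - c := by
    rw [h1]
    refine le_trans hle ?_
    have : (1 - s) * (∑' k : ℕ, (k : ℝ) * (μ k).toReal) ≤ (1 - s) * 1 :=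
      mul_le_mul_of_nonneg_left hmr (by linarith)
    linarith
  linarith

lemma gw_master (μ : PMF ℕ) (h0 : 0 < μ 0) (h01 : μ 0 + μ 1 < 1)
    (gw : ℕ → PMF ℕ) (hgw0 : gw 0 = PMF.pure 1)
    (hgwS : ∀ n, gw (n+1) = (gw n).bind (iidSum μ)) :
    0 < 1 - (⨆ n, gw n 0) ↔ 1 < ∑' k : ℕ, (k : ℝ≥0∞) * μ k := by
  have he : ∀ n, gw n 0 = (pgfE μ)^[n] 0 := by
    intro n
    rw [← pgfE_gwGen μ gw hgw0 hgwS n 0,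
      tsum_eq_single 0 (fun j hj => by simp [zero_pow hj])]
    simp
  constructor
  · contrapose!
    intro hm
    -- subcritical: extinction = 1
    set r : ℕ → ℝ := fun n => (pmfPgf μ)^[n] 0 with hr
    have hrmem : ∀ n, r n ∈ Set.Icc (0:ℝ) 1 := by
      intro n
      induction n with
      | zero => simp [hr]
      | succ n ih =>
        have : r (n+1) = pmfPgf μ (r n) := by
          rw [hr]; simp [Function.iterate_succ_apply']
        rw [this]
        exact ⟨pmfPgf_nonneg μ ih.1, pmfPgf_le_one μ ih.1 ih.2⟩
    have hbridge : ∀ n, (pgfE μ)^[n] 0 = ENNReal.ofReal (r n) := by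
      intro n
      induction n with
      | zero => simp [hr]
      | succ n ih =>
        rw [Function.iterate_succ_apply', ih,
          pgfE_ofReal μ (hrmem n).1 (hrmem n).2, hr]
        congr 1
        simp [Function.iterate_succ_apply']
    have hrsucc : ∀ n, r (n+1) = pmfPgf μ (r n) := by
      intro n; rw [hr]; simp [Function.iterate_succ_apply']
    have hmono : Monotone r := by
      apply monotone_nat_of_le_succ
      intro n
      rcases lt_or_eq_of_le (hrmem n).2 with hlt | heq
      · rw [hrsucc]
        exact (subcrit_strict μ h01 hm (r n) (hrmem n).1 hlt).le
      · rw [hrsucc, heq, pmfPgf_one]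
    have hbdd : BddAbove (Set.range r) := ⟨1, by rintro x ⟨n, rfl⟩; exact (hrmem n).2⟩
    set l : ℝ := ⨆ n, r n with hldef
    have htend : Filter.Tendsto r Filter.atTop (nhds l) := tendsto_atTop_ciSup hmono hbdd
    have hl0 : 0 ≤ l := le_ciSup_of_le hbdd 0 (hrmem 0).1
    have hl1 : l ≤ 1 := ciSup_le fun n => (hrmem n).2
    have hfl : pmfPgf μ l = l := by
      have h1 : Filter.Tendsto (fun n => pmfPgf μ (r n)) Filter.atTop
          (nhds (pmfPgf μ l)) := by
        apply Filter.Tendsto.comp (pmfPgf_continuousOn μ l ⟨hl0, hl1⟩)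
        exact tendsto_nhdsWithin_of_tendsto_nhds_of_eventually_within r htend
          (Filter.Eventually.of_forall fun n => hrmem n)
      have h2 : Filter.Tendsto (fun n => pmfPgf μ (r n)) Filter.atTop (nhds l) := by
        have heq : (fun n => pmfPgf μ (r n)) = fun n => r (n+1) :=
          funext fun n => (hrsucc n).symm
        rw [heq]
        exact htend.comp (Filter.tendsto_add_atTop_nat 1)
      exact tendsto_nhds_unique h1 h2
    have hl : l = 1 := by
      by_contra hne
      have hlt : l < 1 := lt_of_le_of_ne hl1 hne
      have := subcrit_strict μ h01 hm l hl0 hlt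
      rw [hfl] at this
      exact lt_irrefl _ this
    have h1le : (1:ℝ≥0∞) ≤ ⨆ n, gw n 0 := by
      have htendE : Filter.Tendsto (fun n => ENNReal.ofReal (r n)) Filter.atTop
          (nhds 1) := by
        have := ENNReal.tendsto_ofReal (f := Filter.atTop) htend
        rw [hl] at this
        simpa using this
      apply le_of_tendsto htendE
      apply Filter.Eventually.of_forall
      intro n
      rw [← hbridge n, ← he n]
      exact le_iSup (fun n => gw n 0) n
    rw [tsub_eq_zero_of_le h1le]
  · intro hm
    obtain ⟨q, hq0, hq1, hqfix⟩ := supercrit_fixed μ h0 hm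
    have hiter : ∀ n, (pgfE μ)^[n] 0 ≤ ENNReal.ofReal q := by
      intro n
      induction n with
      | zero => simp
      | succ n ih =>
        rw [Function.iterate_succ_apply']
        calc pgfE μ ((pgfE μ)^[n] 0) ≤ pgfE μ (ENNReal.ofReal q) := pgfE_mono μ ih
          _ = ENNReal.ofReal (pmfPgf μ q) := pgfE_ofReal μ hq0 hq1.le
          _ = ENNReal.ofReal q := by rw [hqfix]
    have hsup : (⨆ n, gw n 0) ≤ ENNReal.ofReal q := by
      apply iSup_le
      intro n
      rw [he n]
      exact hiter n
    have : (⨆ n, gw n 0) < 1 := lt_of_le_of_lt hsup (ENNReal.ofReal_lt_one.mpr hq1)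
    exact tsub_pos_of_lt this

lemma pmfTail_le_one (μ : PMF ℕ) (k : ℕ) : pmfTail μ k ≤ 1 := by
  rw [← μ.tsum_coe]
  exact ENNReal.tsum_le_tsum fun n => by split <;> simp

lemma tail_split (μ : PMF ℕ) (m : ℕ) : pmfTail μ m = μ m + pmfTail μ (m+1) := by
  have hpt : ∀ n : ℕ, (if m ≤ n then μ n else 0)
      = (if n = m then μ n else 0) + (if m+1 ≤ n then μ n else 0) := by
    intro n
    by_cases h1 : n = m
    · subst h1
      simp [show ¬(n+1 ≤ n) from by omega]
    · by_cases h2 : m ≤ n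
      · simp [h1, h2, show m+1 ≤ n from by omega]
      · simp [h1, h2, show ¬(m+1 ≤ n) from by omega]
  rw [pmfTail, tsum_congr hpt, ENNReal.tsum_add,
    tsum_eq_single m (fun n hn => by simp [hn]), if_pos rfl]
  rfl

lemma geom_tail (p : ℝ) (hp0 : 0 < p) (hp1 : p < 1) (Y : PMF ℕ)
    (hY : ∀ i : ℕ, Y i = ENNReal.ofReal ((1 - p) * p ^ i)) :
    ∀ m : ℕ, pmfTail Y m = ENNReal.ofReal (p ^ m) := by
  intro m
  induction m with
  | zero =>
    rw [show pmfTail Y 0 = ∑' n, Y n from tsum_congr fun n => by simp]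
    simp [Y.tsum_coe]
  | succ m ih =>
    have hsplit : pmfTail Y m = Y m + pmfTail Y (m+1) := tail_split Y m
    rw [ih, hY m] at hsplit
    have hne : pmfTail Y (m+1) ≠ ⊤ := (lt_of_le_of_lt (pmfTail_le_one Y (m+1))
      ENNReal.one_lt_top).ne
    have : pmfTail Y (m+1) = ENNReal.ofReal (p ^ m) - ENNReal.ofReal ((1-p) * p ^ m) := by
      rw [hsplit]
      rw [ENNReal.add_sub_cancel_left (by
        exact ENNReal.ofReal_ne_top)]
    have hnn : (0:ℝ) ≤ (1 - p) * p ^ m := mul_nonneg (by linarith) (pow_nonneg hp0.le m)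
    rw [this, ← ENNReal.ofReal_sub _ hnn]
    congr 1
    ring

lemma min_cast (y n : ℕ) :
    ((min y n : ℕ) : ℝ≥0∞) = ∑ k ∈ Finset.range n, (if k < y then (1:ℝ≥0∞) else 0) := by
  have hfil : (Finset.range n).filter (fun k => k < y) = Finset.range (min y n) := by
    ext k
    simp only [Finset.mem_filter, Finset.mem_range, lt_min_iff]
    omega
  rw [Finset.sum_boole, hfil, Finset.card_range]

lemma min_mean (p : ℝ) (hp0 : 0 < p) (hp1 : p < 1) (Y : PMF ℕ)
    (hY : ∀ i : ℕ, Y i = ENNReal.ofReal ((1 - p) * p ^ i)) (n : ℕ) :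
    ∑' y : ℕ, Y y * ((min y n : ℕ) : ℝ≥0∞)
      = ∑ k ∈ Finset.range n, ENNReal.ofReal (p ^ (k+1)) := by
  have h1 : ∀ y : ℕ, Y y * ((min y n : ℕ) : ℝ≥0∞)
      = ∑ k ∈ Finset.range n, (if k + 1 ≤ y then Y y else 0) := by
    intro y
    rw [min_cast, Finset.mul_sum]
    refine Finset.sum_congr rfl fun k _ => ?_
    by_cases h : k < y
    · simp [h, Nat.succ_le_of_lt h]
    · simp [h, show ¬(k+1 ≤ y) from h]
  rw [tsum_congr h1, Summable.tsum_finsetSum (fun k _ => ENNReal.summable)]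
  refine Finset.sum_congr rfl fun k _ => ?_
  exact geom_tail p hp0 hp1 Y hY (k+1)

lemma X_mean (p : ℝ) (hp0 : 0 < p) (hp1 : p < 1) (ξ Y : PMF ℕ)
    (hY : ∀ i : ℕ, Y i = ENNReal.ofReal ((1 - p) * p ^ i)) :
    ∑' k : ℕ, (k : ℝ≥0∞) * (ξ.bind fun n => Y.map fun y => min y n) k
      = ∑' n : ℕ, ξ n * ∑ k ∈ Finset.range n, ENNReal.ofReal (p ^ (k+1)) := by
  have h0 : ∑' k : ℕ, (k : ℝ≥0∞) * (ξ.bind fun n => Y.map fun y => min y n) k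
      = ∑' k : ℕ, (ξ.bind fun n => Y.map fun y => min y n) k * (k : ℝ≥0∞) :=
    tsum_congr fun k => mul_comm _ _
  rw [h0, tsum_bind_mul ξ (fun n => Y.map fun y => min y n) (fun j => (j : ℝ≥0∞))]
  refine tsum_congr fun n => ?_
  congr 1
  rw [tsum_map_mul Y (fun y => min y n) (fun j => (j : ℝ≥0∞))]
  exact min_mean p hp0 hp1 Y hY n

lemma A_swap (p : ℝ) (ξ : PMF ℕ) :
    ∑' x : ℕ, ENNReal.ofReal ((x:ℝ) * p^x) * pmfTail ξ x
      = ∑' n : ℕ, ξ n * ∑ x ∈ Finset.range (n+1), ENNReal.ofReal ((x:ℝ) * p^x) := by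
  have h1 : ∀ x : ℕ, ENNReal.ofReal ((x:ℝ) * p^x) * pmfTail ξ x
      = ∑' n : ℕ, if x ≤ n then ENNReal.ofReal ((x:ℝ) * p^x) * ξ n else 0 := by
    intro x
    rw [pmfTail, ← ENNReal.tsum_mul_left]
    exact tsum_congr fun n => by split <;> simp
  rw [tsum_congr h1, ENNReal.tsum_comm]
  refine tsum_congr fun n => ?_
  have h2 : ∑' x : ℕ, (if x ≤ n then ENNReal.ofReal ((x:ℝ) * p^x) * ξ n else 0)
      = ∑ x ∈ Finset.range (n+1), (if x ≤ n then ENNReal.ofReal ((x:ℝ) * p^x) * ξ n else 0) := by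
    refine tsum_eq_sum (s := Finset.range (n+1)) fun x hx => ?_
    rw [if_neg]
    intro h
    exact hx (Finset.mem_range.mpr (by omega))
  rw [h2, Finset.sum_congr rfl (fun x hx => if_pos (by
    have := Finset.mem_range.mp hx; omega)), ← Finset.sum_mul, mul_comm]

lemma gsum_closed (p : ℝ) : ∀ n : ℕ,
    (1 - p) * (∑ k ∈ Finset.range n, p ^ (k+1)) = p * (1 - p ^ n) := by
  intro n
  induction n with
  | zero => simp
  | succ n ih => rw [Finset.sum_range_succ, mul_add, ih]; ring

lemma G_closed (p : ℝ) : ∀ n : ℕ,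
    (1 - p)^2 * (∑ x ∈ Finset.range (n+1), (x:ℝ) * p ^ x)
      = p - ((n:ℝ)+1) * p^(n+1) + (n:ℝ) * p^(n+2) := by
  intro n
  induction n with
  | zero => simp
  | succ n ih =>
    rw [Finset.sum_range_succ, mul_add, ih]
    push_cast
    ring

/-- the (p,ξ)-MAE branching process (offspring `X = min(Y,ξ)` with `Y`
geometric, `P(Y=i)=(1-p)pⁱ`, independent of `ξ`) survives with positive probability iff
`Σ_{x≥1} x p^x P(ξ ≥ x) > (1 - p·E(ξ p^ξ))/(1-p)`. -/
theorem mae_survival (p : ℝ) (hp0 : 0 < p) (hp1 : p < 1)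
    (ξ Y : PMF ℕ) (hY : ∀ i : ℕ, Y i = ENNReal.ofReal ((1 - p) * p ^ i))
    (hmean : pmfMean ξ ≠ ⊤)
    (hq0 : 0 < (ξ.bind fun n => Y.map fun y => min y n) 0)
    (hq01 : (ξ.bind fun n => Y.map fun y => min y n) 0
        + (ξ.bind fun n => Y.map fun y => min y n) 1 < 1) :
    0 < survivalProb (ξ.bind fun n => Y.map fun y => min y n) ↔
      (1 - p * ∑' n : ℕ, (n : ℝ) * p ^ n * (ξ n).toReal) / (1 - p)
        < ∑' x : ℕ, (x : ℝ) * p ^ x * (pmfTail ξ x).toReal := by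
  set X : PMF ℕ := ξ.bind fun n => Y.map fun y => min y n with hXdef
  have hsurv : survivalProb X = 1 - ⨆ n, gwGen X n 0 := rfl
  rw [hsurv, gw_master X hq0 hq01 (gwGen X) rfl (fun n => rfl)]
  -- notation
  have h1p : (0:ℝ) < 1 - p := by linarith
  -- mean in ENNReal
  have hXmean : ∑' k : ℕ, (k : ℝ≥0∞) * X k
      = ∑' n : ℕ, ξ n * ∑ k ∈ Finset.range n, ENNReal.ofReal (p ^ (k+1)) :=
    X_mean p hp0 hp1 ξ Y hY
  -- geometric bounds
  have hgsum_le : ∀ n : ℕ, (∑ k ∈ Finset.range n, p ^ (k+1)) ≤ p / (1-p) := by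
    intro n
    have h := gsum_closed p n
    rw [le_div_iff₀ h1p]
    nlinarith [pow_nonneg hp0.le n]
  have hMne : (∑' k : ℕ, (k : ℝ≥0∞) * X k) ≠ ⊤ := by
    have hb : ∑' k : ℕ, (k : ℝ≥0∞) * X k ≤ ENNReal.ofReal (p / (1-p)) := by
      rw [hXmean]
      calc ∑' n : ℕ, ξ n * ∑ k ∈ Finset.range n, ENNReal.ofReal (p ^ (k+1))
          ≤ ∑' n : ℕ, ξ n * ENNReal.ofReal (p / (1-p)) := by
            refine ENNReal.tsum_le_tsum fun n => mul_le_mul_right ?_ _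
            rw [← ENNReal.ofReal_sum_of_nonneg (fun k _ => by positivity)]
            exact ENNReal.ofReal_le_ofReal (hgsum_le n)
        _ = ENNReal.ofReal (p / (1-p)) := by
            rw [ENNReal.tsum_mul_right, ξ.tsum_coe, one_mul]
    exact (lt_of_le_of_lt hb ENNReal.ofReal_lt_top).ne
  -- toReal of the mean
  have hMtoReal : (∑' k : ℕ, (k : ℝ≥0∞) * X k).toReal
      = ∑' n : ℕ, (ξ n).toReal * (∑ k ∈ Finset.range n, p ^ (k+1)) := by
    rw [hXmean, ENNReal.tsum_toReal_eq (fun n => ENNReal.mul_ne_top (ξ.apply_ne_top n)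
      (ENNReal.sum_ne_top.mpr fun k _ => ENNReal.ofReal_ne_top))]
    refine tsum_congr fun n => ?_
    rw [ENNReal.toReal_mul, ENNReal.toReal_sum (fun k _ => ENNReal.ofReal_ne_top)]
    congr 1
    exact Finset.sum_congr rfl fun k _ => ENNReal.toReal_ofReal (by positivity)
  -- summabilities
  have Sq : Summable fun n : ℕ => (ξ n).toReal := summable_q ξ
  have hq1sum : ∑' n : ℕ, (ξ n).toReal = 1 := tsum_q ξ
  have Sqp : Summable fun n : ℕ => (ξ n).toReal * p ^ n := summable_qs ξ hp0.le hp1.le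
  have Snp : Summable fun n : ℕ => (n : ℝ) * p ^ n * (ξ n).toReal := by
    have hb : Summable fun n : ℕ => (n : ℝ) ^ 1 * p ^ n :=
      summable_pow_mul_geometric_of_norm_lt_one 1
        (by rw [Real.norm_eq_abs, abs_of_pos hp0]; exact hp1)
    refine Summable.of_nonneg_of_le (fun n => by positivity) (fun n => ?_) hb
    have hq1' : (ξ n).toReal ≤ 1 :=
      le_trans (ENNReal.toReal_mono ENNReal.one_ne_top (ξ.coe_le_one n)) (by norm_num)
    have : (n : ℝ) * p ^ n * (ξ n).toReal ≤ (n : ℝ) * p ^ n * 1 :=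
      mul_le_mul_of_nonneg_left hq1' (by positivity)
    calc (n : ℝ) * p ^ n * (ξ n).toReal ≤ (n : ℝ) * p ^ n * 1 := this
      _ = (n : ℝ) ^ 1 * p ^ n := by ring
  -- (†)
  have hMC : (1-p) * (∑' k : ℕ, (k : ℝ≥0∞) * X k).toReal
      = p * (1 - ∑' n : ℕ, (ξ n).toReal * p ^ n) := by
    rw [hMtoReal, ← tsum_mul_left]
    have hpt : ∀ n : ℕ, (1-p) * ((ξ n).toReal * (∑ k ∈ Finset.range n, p ^ (k+1)))
        = p * (ξ n).toReal - p * ((ξ n).toReal * p ^ n) := by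
      intro n
      linear_combination (ξ n).toReal * (gsum_closed p n)
    rw [tsum_congr hpt, Summable.tsum_sub (Sq.mul_left p) (Sqp.mul_left p),
      tsum_mul_left, tsum_mul_left, hq1sum]
    ring
  -- bound on G
  have hp2 : (0:ℝ) < (1-p)^2 := by positivity
  have hGle : ∀ n : ℕ, (∑ x ∈ Finset.range (n+1), (x:ℝ) * p ^ x) ≤ p / (1-p)^2 := by
    intro n
    have h := G_closed p n
    rw [le_div_iff₀ hp2]
    have hps : p ^ (n+2) = p ^ (n+1) * p := pow_succ p (n+1)
    nlinarith [pow_nonneg hp0.le (n+1),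
      mul_nonneg (mul_nonneg (Nat.cast_nonneg n : (0:ℝ) ≤ n) (pow_nonneg hp0.le (n+1)))
        (show (0:ℝ) ≤ 1 - p by linarith)]
  have hAswap := A_swap p ξ
  have hAne : (∑' x : ℕ, ENNReal.ofReal ((x:ℝ) * p ^ x) * pmfTail ξ x) ≠ ⊤ := by
    have hb : (∑' x : ℕ, ENNReal.ofReal ((x:ℝ) * p ^ x) * pmfTail ξ x)
        ≤ ENNReal.ofReal (p / (1-p)^2) := by
      rw [hAswap]
      calc ∑' n : ℕ, ξ n * ∑ x ∈ Finset.range (n+1), ENNReal.ofReal ((x:ℝ) * p ^ x)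
          ≤ ∑' n : ℕ, ξ n * ENNReal.ofReal (p / (1-p)^2) := by
            refine ENNReal.tsum_le_tsum fun n => mul_le_mul_right ?_ _
            rw [← ENNReal.ofReal_sum_of_nonneg (fun x _ => by positivity)]
            exact ENNReal.ofReal_le_ofReal (hGle n)
        _ = ENNReal.ofReal (p / (1-p)^2) := by
            rw [ENNReal.tsum_mul_right, ξ.tsum_coe, one_mul]
    exact (lt_of_le_of_lt hb ENNReal.ofReal_lt_top).ne
  have htail_ne : ∀ x : ℕ, pmfTail ξ x ≠ ⊤ :=
    fun x => (lt_of_le_of_lt (pmfTail_le_one ξ x) ENNReal.one_lt_top).ne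
  -- statement RHS = AE.toReal
  have hR : (∑' x : ℕ, (x : ℝ) * p ^ x * (pmfTail ξ x).toReal)
      = (∑' x : ℕ, ENNReal.ofReal ((x:ℝ) * p ^ x) * pmfTail ξ x).toReal := by
    rw [ENNReal.tsum_toReal_eq (fun x => ENNReal.mul_ne_top ENNReal.ofReal_ne_top
      (htail_ne x))]
    refine tsum_congr fun x => ?_
    rw [ENNReal.toReal_mul, ENNReal.toReal_ofReal (by positivity)]
  have hAtoReal : (∑' x : ℕ, ENNReal.ofReal ((x:ℝ) * p ^ x) * pmfTail ξ x).toReal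
      = ∑' n : ℕ, (ξ n).toReal * (∑ x ∈ Finset.range (n+1), (x:ℝ) * p ^ x) := by
    rw [hAswap, ENNReal.tsum_toReal_eq (fun n => ENNReal.mul_ne_top (ξ.apply_ne_top n)
      (ENNReal.sum_ne_top.mpr fun x _ => ENNReal.ofReal_ne_top))]
    refine tsum_congr fun n => ?_
    rw [ENNReal.toReal_mul, ENNReal.toReal_sum (fun x _ => ENNReal.ofReal_ne_top)]
    congr 1
    exact Finset.sum_congr rfl fun x _ => ENNReal.toReal_ofReal (by positivity)
  -- (★)
  have hRC : (1-p)^2 * (∑' x : ℕ, ENNReal.ofReal ((x:ℝ) * p ^ x) * pmfTail ξ x).toReal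
      = p * (1 - ∑' n : ℕ, (ξ n).toReal * p ^ n)
        - p * (1-p) * (∑' n : ℕ, (n : ℝ) * p ^ n * (ξ n).toReal) := by
    rw [hAtoReal, ← tsum_mul_left]
    have hpt2 : ∀ n : ℕ, (1-p)^2 * ((ξ n).toReal * (∑ x ∈ Finset.range (n+1), (x:ℝ) * p ^ x))
        = (p * (ξ n).toReal + p^2 * ((n:ℝ) * p ^ n * (ξ n).toReal))
          - (p * ((n:ℝ) * p ^ n * (ξ n).toReal) + p * ((ξ n).toReal * p ^ n)) := by
      intro n
      linear_combination (ξ n).toReal * (G_closed p n)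
    rw [tsum_congr hpt2,
      Summable.tsum_sub ((Sq.mul_left p).add (Snp.mul_left (p^2)))
        ((Snp.mul_left p).add (Sqp.mul_left p)),
      Summable.tsum_add (Sq.mul_left p) (Snp.mul_left (p^2)),
      Summable.tsum_add (Snp.mul_left p) (Sqp.mul_left p),
      tsum_mul_left, tsum_mul_left, tsum_mul_left, tsum_mul_left, hq1sum]
    ring
  -- 1 < mean ↔ 1 < mean.toReal
  have hlt_iff : (1 < ∑' k : ℕ, (k : ℝ≥0∞) * X k)
      ↔ 1 < (∑' k : ℕ, (k : ℝ≥0∞) * X k).toReal := by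
    constructor
    · intro h
      have := ENNReal.toReal_strict_mono hMne h
      simpa using this
    · intro h
      by_contra hc
      push_neg at hc
      have := ENNReal.toReal_mono ENNReal.one_ne_top hc
      simp only [ENNReal.toReal_one] at this
      linarith
  rw [hlt_iff, hR]
  have hkey : (1-p) * (∑' x : ℕ, ENNReal.ofReal ((x:ℝ) * p ^ x) * pmfTail ξ x).toReal
      = (∑' k : ℕ, (k : ℝ≥0∞) * X k).toReal
        - p * (∑' n : ℕ, (n : ℝ) * p ^ n * (ξ n).toReal) := by
    apply mul_left_cancel₀ (show (1:ℝ)-p ≠ 0 by linarith)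
    linear_combination hRC - hMC
  rw [div_lt_iff₀ h1p]
  constructor <;> intro h <;> nlinarith [hkey]
end
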